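/- For nonnegative random variables Z₁, …, Z_n (not all zero a.s., with ln Z_i integrable), E[ln Σ_i Z_i] ≥ ln Σ_i exp(E[ln Z_i]). -/

import Mathlib

open MeasureTheory ProbabilityTheory
open scoped BigOperators

/-- Variational lower bound on the expectation of a log-sum: for positive integrable
random variables `Z₁, …, Z_n` with integrable logarithms,
`E[ln Σᵢ Zᵢ] ≥ ln Σᵢ exp(E[ln Zᵢ])`. -/
theorem log_sum_expectation_lower_bound {Ω : Type*} [MeasureSpace Ω]
    [IsProbabilityMeasure (volume : Measure Ω)] (n : ℕ) (Z : Fin n → Ω → ℝ)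
    (hpos : ∀ i ω, 0 < Z i ω)
    (hint : ∀ i, Integrable (Z i))
    (hlogint : ∀ i, Integrable (fun ω => Real.log (Z i ω)))
    (hsumint : Integrable (fun ω => Real.log (∑ i, Z i ω))) :
    ∫ ω, Real.log (∑ i, Z i ω) ≥ Real.log (∑ i, Real.exp (∫ ω, Real.log (Z i ω))) := by
  rcases Nat.eq_zero_or_pos n with hn | hn
  · subst hn; simp
  have : Nonempty (Fin n) := Fin.pos_iff_nonempty.mp hn
  have hne : (Finset.univ : Finset (Fin n)).Nonempty := Finset.univ_nonempty
  set m : Fin n → ℝ := fun i => ∫ ω, Real.log (Z i ω) with hm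
  set c : ℝ := ∑ i, Real.exp (m i) with hc
  have hcpos : 0 < c := Finset.sum_pos (fun i _ => Real.exp_pos _) hne
  set w : Fin n → ℝ := fun i => Real.exp (m i) / c with hw
  have hwpos : ∀ i, 0 < w i := fun i => div_pos (Real.exp_pos _) hcpos
  have hwsum : ∑ i, w i = 1 := by
    simp only [hw, ← Finset.sum_div, ← hc]
    field_simp
  have hlogw : ∀ i, Real.log (w i) = m i - Real.log c := by
    intro i
    simp [hw, Real.log_div (Real.exp_ne_zero _) (ne_of_gt hcpos), Real.log_exp]
  -- pointwise inequality
  have hpt : ∀ ω, (∑ i, w i * Real.log (Z i ω)) - (∑ i, w i * (m i - Real.log c))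
      ≤ Real.log (∑ i, Z i ω) := by
    intro ω
    have key := strictConcaveOn_log_Ioi.concaveOn.le_map_sum
      (w := w) (p := fun i => Z i ω / w i) (t := Finset.univ)
      (fun i _ => (hwpos i).le) hwsum
      (fun i _ => Set.mem_Ioi.mpr (div_pos (hpos i ω) (hwpos i)))
    have hsum : (∑ i, w i • (Z i ω / w i)) = ∑ i, Z i ω := by
      refine Finset.sum_congr rfl fun i _ => ?_
      rw [smul_eq_mul, mul_div_assoc']; exact mul_div_cancel_left₀ _ (hwpos i).ne'
    rw [hsum] at key
    refine le_trans (le_of_eq ?_) key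
    rw [← Finset.sum_sub_distrib]
    refine Finset.sum_congr rfl fun i _ => ?_
    rw [smul_eq_mul, Real.log_div (ne_of_gt (hpos i ω)) (ne_of_gt (hwpos i)), hlogw i]
    ring
  -- integrate
  have hgint : Integrable (fun ω => (∑ i, w i * Real.log (Z i ω))
      - (∑ i, w i * (m i - Real.log c))) := by
    exact (integrable_finset_sum _ (fun i _ => (hlogint i).const_mul (w i))).sub
      (integrable_const _)
  have hmono := integral_mono hgint hsumint (fun ω => hpt ω)
  have hgval : ∫ ω, ((∑ i, w i * Real.log (Z i ω)) - (∑ i, w i * (m i - Real.log c)))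
      = Real.log c := by
    rw [integral_sub (integrable_finset_sum _ (fun i _ => (hlogint i).const_mul (w i)))
      (integrable_const _), integral_finset_sum _ (fun i _ => (hlogint i).const_mul (w i))]
    simp only [integral_const_mul, integral_const, probReal_univ, ENNReal.toReal_one, one_smul]
    show (∑ i, w i * m i) - _ = _
    have : (∑ i, w i * m i) - (∑ i, w i * (m i - Real.log c)) = ∑ i, w i * Real.log c := by
      rw [← Finset.sum_sub_distrib]
      refine Finset.sum_congr rfl fun i _ => ?_
      ring
    rw [this, ← Finset.sum_mul, hwsum, one_mul]
  rw [hgval] at hmono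
  exact hmono
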